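/- Let P_A, P_B be orthogonal projections onto subspaces U, V of a finite-dimensional real inner product space. The restriction of T = (I-P_B)(I-P_A) to the subspace U + V has spectral radius strictly less than 1. -/

import Mathlib

open Submodule Filter Topology

noncomputable def proj {E : Type*} [NormedAddCommGroup E] [InnerProductSpace ℝ E]
    [FiniteDimensional ℝ E] (U : Submodule ℝ E) : E →ₗ[ℝ] E :=
  U.subtype ∘ₗ (orthogonalProjection U).toLinearMap

lemma proj_pythagoras {E : Type*} [NormedAddCommGroup E] [InnerProductSpace ℝ E]
    [FiniteDimensional ℝ E] (U : Submodule ℝ E) (x : E) :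
    ‖x - proj U x‖ ^ 2 + ‖proj U x‖ ^ 2 = ‖x‖ ^ 2 := by
  have h1 : proj U x ∈ U := (orthogonalProjection U x).2
  have h2 : x - proj U x ∈ Uᗮ := Submodule.sub_starProjection_mem_orthogonal (K := U) x
  have hinner : inner ℝ (x - proj U x) (proj U x) = (0 : ℝ) := by
    rw [real_inner_comm]
    exact (Submodule.mem_orthogonal U _).mp h2 _ h1
  have : x = (x - proj U x) + proj U x := by abel
  calc ‖x - proj U x‖ ^ 2 + ‖proj U x‖ ^ 2
      = ‖(x - proj U x) + proj U x‖ ^ 2 := by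
        rw [norm_add_sq_real, hinner]; ring
    _ = ‖x‖ ^ 2 := by rw [← this]

lemma proj_mem_orthogonal_of_zero {E : Type*} [NormedAddCommGroup E] [InnerProductSpace ℝ E]
    [FiniteDimensional ℝ E] (U : Submodule ℝ E) {x : E} (h : proj U x = 0) : x ∈ Uᗮ := by
  refine orthogonalProjection_eq_zero_iff.mp ?_
  exact Submodule.coe_eq_zero.mp h

set_option maxHeartbeats 1000000 in
theorem stmt14 {E : Type*} [NormedAddCommGroup E] [InnerProductSpace ℝ E] [FiniteDimensional ℝ E]
    (U V : Submodule ℝ E)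
    (hT : ∀ x ∈ U ⊔ V,
      ((LinearMap.id - proj V) ∘ₗ (LinearMap.id - proj U) : Module.End ℝ E) x ∈ U ⊔ V) :
    spectralRadius ℝ
      ((((LinearMap.id - proj V) ∘ₗ (LinearMap.id - proj U) : Module.End ℝ E)).restrict
        hT).toContinuousLinearMap < 1 := by
  set T : Module.End ℝ E :=
    ((LinearMap.id - proj V) ∘ₗ (LinearMap.id - proj U) : Module.End ℝ E) with hTdef
  set fR : Module.End ℝ ↥(U ⊔ V) := T.restrict hT with hfR
  set A := LinearMap.toContinuousLinearMap fR with hA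
  have hspec : spectrum ℝ A = spectrum ℝ fR :=
    AlgEquiv.spectrum_eq (Module.End.toContinuousLinearMap (𝕜 := ℝ) ↥(U ⊔ V)) fR
  -- every eigenvalue has absolute value < 1
  have key : ∀ μ ∈ spectrum ℝ A, ‖μ‖₊ < 1 := by
    intro μ hμ
    rw [hspec, ← Module.End.hasEigenvalue_iff_mem_spectrum] at hμ
    obtain ⟨v, hv⟩ := hμ.exists_hasEigenvector
    have hvne : (v : E) ≠ 0 := fun h => hv.2 (Subtype.ext h)
    have heig : T (v : E) = μ • (v : E) := by
      have := congrArg (Subtype.val) hv.apply_eq_smul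
      simpa [hfR, LinearMap.restrict_apply] using this
    -- set up notation
    set x : E := (v : E) with hxdef
    set y : E := x - proj U x with hydef
    have hTy : y - proj V y = μ • x := by
      simpa [hTdef, LinearMap.sub_apply, LinearMap.comp_apply, hydef] using heig
    have hU := proj_pythagoras U x
    have hV := proj_pythagoras V y
    have hy_le : ‖y‖ ^ 2 ≤ ‖x‖ ^ 2 := by nlinarith [sq_nonneg ‖proj U x‖]
    have hz_le : ‖y - proj V y‖ ^ 2 ≤ ‖y‖ ^ 2 := by nlinarith [sq_nonneg ‖proj V y‖]
    have hznorm : ‖y - proj V y‖ = |μ| * ‖x‖ := by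
      rw [hTy, norm_smul, Real.norm_eq_abs]
    rw [← NNReal.coe_lt_coe]
    simp only [coe_nnnorm, Real.norm_eq_abs, NNReal.coe_one]
    by_contra hcon
    push_neg at hcon
    have hxpos : 0 < ‖x‖ := norm_pos_iff.mpr hvne
    have hx_le : ‖x‖ ≤ ‖y - proj V y‖ := by
      rw [hznorm]; nlinarith
    have hxz : ‖x‖ ^ 2 ≤ ‖y - proj V y‖ ^ 2 := by nlinarith
    have hyeq : ‖y‖ ^ 2 = ‖x‖ ^ 2 := le_antisymm hy_le (le_trans hxz hz_le)
    have hzeq : ‖y - proj V y‖ ^ 2 = ‖y‖ ^ 2 := le_antisymm hz_le (hyeq ▸ hxz)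
    have hpU : proj U x = 0 := by
      have : ‖proj U x‖ ^ 2 = 0 := by nlinarith
      simpa using (pow_eq_zero_iff (by norm_num)).mp this
    have hpV : proj V y = 0 := by
      have : ‖proj V y‖ ^ 2 = 0 := by nlinarith
      simpa using (pow_eq_zero_iff (by norm_num)).mp this
    have hyx : y = x := by rw [hydef, hpU, sub_zero]
    have hxU : x ∈ Uᗮ := proj_mem_orthogonal_of_zero U hpU
    have hxV : x ∈ Vᗮ := proj_mem_orthogonal_of_zero V (hyx ▸ hpV)
    -- x ∈ U ⊔ V and x ⟂ U, x ⟂ V imply x = 0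
    obtain ⟨u, hu, w, hw, huw⟩ := Submodule.mem_sup.mp v.2
    have h0 : (inner ℝ (u + w) x : ℝ) = inner ℝ x x := by rw [huw, ← hxdef]
    have : inner ℝ x x = (0 : ℝ) := by
      rw [← h0, inner_add_left, (Submodule.mem_orthogonal U x).mp hxU u hu,
        (Submodule.mem_orthogonal V x).mp hxV w hw, add_zero]
    exact hvne (inner_self_eq_zero.mp this)
  rcases (spectrum ℝ A).eq_empty_or_nonempty with hempty | hne
  · simp [spectralRadius, hempty]
  · have hfin : (spectrum ℝ A).Finite := hspec ▸ Module.End.finite_spectrum fR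
    obtain ⟨b, hb, hmax⟩ := hfin.toFinset.exists_max_image (fun k => ‖k‖₊)
      (by rwa [← Set.Finite.toFinset_nonempty hfin] at hne)
    have hb' : b ∈ spectrum ℝ A := (Set.Finite.mem_toFinset hfin).mp hb
    have hle : spectralRadius ℝ A ≤ (‖b‖₊ : ENNReal) := by
      unfold spectralRadius
      exact iSup₂_le fun k hk =>
        ENNReal.coe_le_coe.mpr (hmax k ((Set.Finite.mem_toFinset hfin).mpr hk))
    refine lt_of_le_of_lt hle ?_
    exact_mod_cast key b hb'
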